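/- Suppose (γ, ρ) is a symmetry pair of the system. Let {(Xᵢ, [τᵢ₋₁,τᵢ])}ᵢ₌₁ʲ be a (K, p, [t₁,t₂])-reachtube and {(Xᵢ', [τᵢ₋₁,τᵢ])}ᵢ₌₁ʲ be a time-aligned exact-reachset sequence for (K', p'), i.e., Xᵢ' = Reach(K', p', [τᵢ₋₁,τᵢ]). If K' ⊆ γ(K) and p' = ρ(p), then for every i ∈ [j], Xᵢ' ⊆ γ(Xᵢ). -/
import Mathlib

/-- Reachable states over a time interval `[a, b]` of the flow `ξ` with parameter `p`. -/
def Reach {n : ℕ} {P : Type*} (ξ : (Fin n → ℝ) → P → ℝ → (Fin n → ℝ))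
    (K : Set (Fin n → ℝ)) (p : P) (a b : ℝ) : Set (Fin n → ℝ) :=
  {x | ∃ x₀ ∈ K, ∃ t ∈ Set.Icc a b, x = ξ x₀ p t}

/-- If `(γ, ρ)` is a symmetry pair, `{(Xᵢ,[τᵢ₋₁,τᵢ])}ᵢ` is a
`(K,p,[t₁,t₂])`-reachtube, `Xᵢ' = Reach K' p' [τᵢ₋₁,τᵢ]` is a time-aligned exact-reachset
sequence, `K' ⊆ γ(K)` and `p' = ρ p`, then `Xᵢ' ⊆ γ(Xᵢ)` for every `i`. -/
theorem stmt_5 {n : ℕ} {P : Type*}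
    (ξ : (Fin n → ℝ) → P → ℝ → (Fin n → ℝ))
    (γ : (Fin n → ℝ) → (Fin n → ℝ)) (ρ : P → P)
    (hsym : ∀ (x₀ : Fin n → ℝ) (p : P) (t : ℝ), γ (ξ x₀ p t) = ξ (γ x₀) (ρ p) t)
    (K K' : Set (Fin n → ℝ)) (p p' : P) (t₁ t₂ : ℝ)
    (j : ℕ) (X X' : ℕ → Set (Fin n → ℝ)) (τ : ℕ → ℝ)
    (hτ0 : τ 0 = t₁) (hτj : τ j = t₂) (hmono : ∀ i < j, τ i < τ (i + 1))
    (htube : ∀ i < j, Reach ξ K p (τ i) (τ (i + 1)) ⊆ X i)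
    (htube' : ∀ i < j, X' i = Reach ξ K' p' (τ i) (τ (i + 1)))
    (hK : K' ⊆ γ '' K) (hp : p' = ρ p) :
    ∀ i < j, X' i ⊆ γ '' X i := by
  intro i hi x hx
  rw [htube' i hi] at hx
  obtain ⟨x₀, hx₀, t, ht, rfl⟩ := hx
  obtain ⟨y₀, hy₀, rfl⟩ := hK hx₀
  refine ⟨ξ y₀ p t, htube i hi ⟨y₀, hy₀, t, ht, rfl⟩, ?_⟩
  rw [hsym, hp]
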